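/- Let θ = 2.13 and let r be real with 4.999 ≤ r ≤ 5. If γ is the unique root in (0, 0.56) of q(x) = 1 − (r − θ)x + (r − 2θ)x² + θx³, then 1/(1 − γ) − θ > 0.04. -/
import Mathlib


/-- The cubic `q(x) = 1 - (r - θ)x + (r - 2θ)x² + θx³`. -/
def q (r θ x : ℝ) : ℝ :=
  1 - (r - θ) * x + (r - 2 * θ) * x ^ 2 + θ * x ^ 3

/-- Let `θ = 2.13` and `4.999 ≤ r ≤ 5`. If `γ` is the root of `q` in
`(0, 0.56)`, then `1/(1 - γ) - θ > 0.04`. -/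
theorem gap_at_213 (θ r γ : ℝ) (hθ : θ = 2.13) (hr1 : 4.999 ≤ r) (hr2 : r ≤ 5)
    (hγ : 0 < γ ∧ γ < 0.56 ∧ q r θ γ = 0) :
    0.04 < 1 / (1 - γ) - θ := by
  obtain ⟨h0, h1, hq⟩ := hγ
  subst hθ
  rw [q] at hq
  have hγbig : (0.5392 : ℝ) < γ := by
    by_contra hle
    push_neg at hle
    nlinarith [mul_nonneg (sub_nonneg.2 hr1) (mul_pos h0 h0).le,
      mul_nonneg (sub_nonneg.2 hr2) (sub_nonneg.2 (mul_le_one₀ (by linarith) h0.le (by linarith))),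
      mul_nonneg (mul_nonneg h0.le h0.le) h0.le,
      mul_nonneg (sub_nonneg.2 hle) (mul_nonneg h0.le h0.le),
      mul_nonneg (sub_nonneg.2 hle) h0.le,
      mul_nonneg (sub_nonneg.2 hle) (sub_nonneg.2 hle)]
  have hpos : (0 : ℝ) < 1 - γ := by linarith
  have : (2.17 : ℝ) < 1 / (1 - γ) := by
    rw [lt_div_iff₀ hpos]
    nlinarith
  linarith
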